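/- Let K be a field, let f ∈ K[[x]] be a power series with f(0) = 0, and let P(x,y) ∈ K[x,y] satisfy P(x, f(x)) = 0 and ∂P/∂y(0,0) ≠ 0. Then the rational function R(x,y) = y²·(∂P/∂y)(xy, y)/P(xy, y) belongs to K[[x,y]] and its diagonal equals f, i.e. Δ(R) = f. -/

import Mathlib

/-- The diagonal of a two-variable power series: `Δ(∑ r(i,j) x^i y^j)(t) = ∑ r(n,n) t^n`. -/
noncomputable def diagonal2 {K : Type*} [CommSemiring K]
    (R : MvPowerSeries (Fin 2) K) : PowerSeries K :=
  PowerSeries.mk fun m =>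
    MvPowerSeries.coeff (Finsupp.equivFunOnFinite.symm fun _ => m) R

open MvPowerSeries

noncomputable section

namespace FurstAux

variable {K : Type*} [Field K]

/-- diagonal exponent -/
def dg (m : ℕ) : Fin 2 →₀ ℕ := Finsupp.equivFunOnFinite.symm fun _ => m

@[simp] lemma dg_apply (m : ℕ) (i : Fin 2) : dg m i = m := rfl

lemma ext2 {d e : Fin 2 →₀ ℕ} (h0 : d 0 = e 0) (h1 : d 1 = e 1) : d = e := by
  ext i
  fin_cases i
  · exact h0
  · exact h1

lemma eq_dg_iff {d : Fin 2 →₀ ℕ} {m : ℕ} : d = dg m ↔ d 0 = m ∧ d 1 = m := by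
  constructor
  · rintro rfl; simp
  · rintro ⟨h0, h1⟩; exact ext2 (by simpa using h0) (by simpa using h1)

lemma eq_zero_iff {d : Fin 2 →₀ ℕ} : d = 0 ↔ d 0 = 0 ∧ d 1 = 0 := by
  constructor
  · rintro rfl; simp
  · rintro ⟨h0, h1⟩; exact ext2 (by simpa using h0) (by simpa using h1)


def sigFun (a : PowerSeries K) : MvPowerSeries (Fin 2) K :=
  fun d => if d 0 = d 1 then PowerSeries.coeff (d 0) a else 0

lemma coeff_sigFun (a : PowerSeries K) (d : Fin 2 →₀ ℕ) :
    MvPowerSeries.coeff d (sigFun a) = if d 0 = d 1 then PowerSeries.coeff (d 0) a else 0 := rfl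

lemma sigFun_one : sigFun (1 : PowerSeries K) = 1 := by
  apply MvPowerSeries.ext; intro d
  rw [coeff_sigFun, MvPowerSeries.coeff_one, PowerSeries.coeff_one]
  by_cases h : d = 0
  · rcases eq_zero_iff.mp h with ⟨h0, h1⟩
    simp [h, h0, h1]
  · rw [if_neg h]
    by_cases h01 : d 0 = d 1
    · rw [if_pos h01, if_neg (fun h0 => h (eq_zero_iff.mpr ⟨h0, h01 ▸ h0⟩))]
    · rw [if_neg h01]

lemma sigFun_add (a b : PowerSeries K) : sigFun (a + b) = sigFun a + sigFun b := by
  apply MvPowerSeries.ext; intro d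
  rw [map_add, coeff_sigFun, coeff_sigFun, coeff_sigFun, map_add]
  split <;> simp

lemma sigFun_mul (a b : PowerSeries K) : sigFun (a * b) = sigFun a * sigFun b := by
  classical
  apply MvPowerSeries.ext; intro d
  rw [coeff_sigFun, MvPowerSeries.coeff_mul]
  simp only [coeff_sigFun]
  by_cases h : d 0 = d 1
  · rw [if_pos h, PowerSeries.coeff_mul]
    refine Eq.trans ?_ (Finset.sum_filter_of_ne (p := fun x : (Fin 2 →₀ ℕ) × (Fin 2 →₀ ℕ) =>
        x.1 0 = x.1 1 ∧ x.2 0 = x.2 1) ?_)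
    · refine Finset.sum_nbij' (i := fun p : ℕ × ℕ => ((dg p.1, dg p.2) : (Fin 2 →₀ ℕ) × (Fin 2 →₀ ℕ)))
        (j := fun x : (Fin 2 →₀ ℕ) × (Fin 2 →₀ ℕ) => (x.1 0, x.2 0)) ?_ ?_ ?_ ?_ ?_
      · intro p hp
        rw [Finset.HasAntidiagonal.mem_antidiagonal] at hp
        simp only [Finset.mem_filter, Finset.HasAntidiagonal.mem_antidiagonal]
        refine ⟨ext2 ?_ ?_, by simp, by simp⟩ <;> simp [hp, ← h]
      · intro x hx
        rw [Finset.mem_filter, Finset.HasAntidiagonal.mem_antidiagonal] at hx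
        rw [Finset.HasAntidiagonal.mem_antidiagonal]
        have := congrArg (fun (e : Fin 2 →₀ ℕ) => e 0) hx.1
        simpa using this
      · intro p hp
        simp
      · intro x hx
        rw [Finset.mem_filter, Finset.HasAntidiagonal.mem_antidiagonal] at hx
        obtain ⟨hsum, h1, h2⟩ := hx
        exact Prod.ext (eq_dg_iff.mpr ⟨rfl, h1.symm⟩).symm (eq_dg_iff.mpr ⟨rfl, h2.symm⟩).symm
      · intro p hp
        simp
    · intro x hx hne
      constructor
      · by_contra hc
        rw [if_neg hc, zero_mul] at hne
        exact hne rfl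
      · by_contra hc
        rw [if_neg hc, mul_zero] at hne
        exact hne rfl
  · rw [if_neg h]
    refine (Finset.sum_eq_zero ?_).symm
    intro x hx
    rw [Finset.HasAntidiagonal.mem_antidiagonal] at hx
    by_cases h1 : x.1 0 = x.1 1
    · by_cases h2 : x.2 0 = x.2 1
      · exfalso
        apply h
        have e0 : x.1 0 + x.2 0 = d 0 := by
          have := congrArg (fun (e : Fin 2 →₀ ℕ) => e 0) hx; simpa using this
        have e1 : x.1 1 + x.2 1 = d 1 := by
          have := congrArg (fun (e : Fin 2 →₀ ℕ) => e 1) hx; simpa using this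
        omega
      · rw [if_neg h2, mul_zero]
    · rw [if_neg h1, zero_mul]

/-- the map `K[[x]] → K[[x,y]]`, `a(x) ↦ a(xy)` -/
def sig : PowerSeries K →+* MvPowerSeries (Fin 2) K where
  toFun := sigFun
  map_one' := sigFun_one
  map_mul' := sigFun_mul
  map_zero' := by
    apply MvPowerSeries.ext; intro d
    rw [coeff_sigFun]
    split <;> simp

  map_add' := sigFun_add

@[simp] lemma coeff_sig (a : PowerSeries K) (d : Fin 2 →₀ ℕ) :
    MvPowerSeries.coeff d (sig a) = if d 0 = d 1 then PowerSeries.coeff (d 0) a else 0 := rfl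


lemma sig_C (k : K) : sig (PowerSeries.C k) = MvPowerSeries.C k := by
  apply MvPowerSeries.ext; intro d
  rw [coeff_sig, MvPowerSeries.coeff_C]
  by_cases h : d = 0
  · rcases eq_zero_iff.mp h with ⟨h0, h1⟩
    simp [h, h0, h1]
  · rw [if_neg h]
    by_cases h01 : d 0 = d 1
    · rw [if_pos h01, PowerSeries.coeff_C,
        if_neg (fun h0 => h (eq_zero_iff.mpr ⟨h0, h01 ▸ h0⟩))]
    · rw [if_neg h01]

lemma sig_X : sig (PowerSeries.X : PowerSeries K) = MvPowerSeries.X 0 * MvPowerSeries.X 1 := by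
  apply MvPowerSeries.ext; intro d
  rw [coeff_sig]
  have h2 : (MvPowerSeries.X 0 * MvPowerSeries.X 1 : MvPowerSeries (Fin 2) K)
      = MvPowerSeries.monomial (dg 1) 1 := by
    rw [MvPowerSeries.X_def, MvPowerSeries.X_def, MvPowerSeries.monomial_mul_monomial, one_mul]
    have he : (Finsupp.single (0 : Fin 2) 1 + Finsupp.single (1 : Fin 2) 1) = dg 1 := by
      refine ext2 ?_ ?_ <;> simp
    rw [he]
  rw [h2, MvPowerSeries.coeff_monomial]
  by_cases h : d 0 = d 1
  · by_cases h1 : d 0 = 1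
    · rw [if_pos h, PowerSeries.coeff_X, if_pos h1, if_pos (eq_dg_iff.mpr ⟨h1, h ▸ h1⟩)]
    · rw [if_pos h, PowerSeries.coeff_X, if_neg h1,
        if_neg (fun hc => h1 (eq_dg_iff.mp hc).1)]
  · rw [if_neg h, if_neg (fun hc => h ((eq_dg_iff.mp hc).1.trans (eq_dg_iff.mp hc).2.symm))]

lemma constantCoeff_sig (a : PowerSeries K) :
    MvPowerSeries.constantCoeff (sig a) = PowerSeries.constantCoeff a := by
  rw [← MvPowerSeries.coeff_zero_eq_constantCoeff_apply, coeff_sig]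
  simp [PowerSeries.coeff_zero_eq_constantCoeff]

/-! ### weight classes -/

/-- weight functions on exponents -/
def wtok (w : (Fin 2 →₀ ℕ) → ℤ) : Prop := ∀ a b, w (a + b) = w a + w b

lemma wtok_zero {w : (Fin 2 →₀ ℕ) → ℤ} (hw : wtok w) : w 0 = 0 := by
  have := hw 0 0; simp at this; linarith

def Cls (w : (Fin 2 →₀ ℕ) → ℤ) (k : ℤ) (A : MvPowerSeries (Fin 2) K) : Prop :=
  ∀ d, MvPowerSeries.coeff d A ≠ 0 → k ≤ w d

lemma Cls_mono {w : (Fin 2 →₀ ℕ) → ℤ} {k l : ℤ} (hkl : l ≤ k) {A : MvPowerSeries (Fin 2) K}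
    (hA : Cls w k A) : Cls w l A := fun d hd => le_trans hkl (hA d hd)

lemma Cls_mul {w : (Fin 2 →₀ ℕ) → ℤ} (hw : wtok w) {k l : ℤ} {A B : MvPowerSeries (Fin 2) K}
    (hA : Cls w k A) (hB : Cls w l B) : Cls w (k + l) (A * B) := by
  intro d hd
  rw [MvPowerSeries.coeff_mul] at hd
  obtain ⟨x, hx, hne⟩ := Finset.exists_ne_zero_of_sum_ne_zero hd
  rw [Finset.HasAntidiagonal.mem_antidiagonal] at hx
  have h1 := hA x.1 (left_ne_zero_of_mul hne)
  have h2 := hB x.2 (right_ne_zero_of_mul hne)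
  rw [← hx, hw]
  linarith

lemma Cls_one {w : (Fin 2 →₀ ℕ) → ℤ} (hw : wtok w) : Cls w 0 (1 : MvPowerSeries (Fin 2) K) := by
  intro d hd
  rw [MvPowerSeries.coeff_one] at hd
  by_cases h : d = 0
  · rw [h, wtok_zero hw]
  · rw [if_neg h] at hd; exact absurd rfl hd

lemma Cls_sub {w : (Fin 2 →₀ ℕ) → ℤ} {k : ℤ} {A B : MvPowerSeries (Fin 2) K}
    (hA : Cls w k A) (hB : Cls w k B) : Cls w k (A - B) := by
  intro d hd
  rw [map_sub] at hd
  by_cases h : MvPowerSeries.coeff d A = 0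
  · exact hB d (fun hc => hd (by rw [h, hc, sub_zero]))
  · exact hA d h

lemma Cls_inv {w : (Fin 2 →₀ ℕ) → ℤ} (hw : wtok w) {A : MvPowerSeries (Fin 2) K}
    (hA : Cls w 0 A) : Cls w 0 A⁻¹ := by
  classical
  suffices h : ∀ N : ℕ, ∀ d : Fin 2 →₀ ℕ, d 0 + d 1 ≤ N →
      MvPowerSeries.coeff d A⁻¹ ≠ 0 → 0 ≤ w d by
    intro d; exact h (d 0 + d 1) d le_rfl
  intro N
  induction N with
  | zero =>
    intro d hd _
    have h0 : d = 0 := eq_zero_iff.mpr ⟨by omega, by omega⟩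
    rw [h0, wtok_zero hw]
  | succ N ih =>
    intro d hd hne
    by_cases h0 : d = 0
    · rw [h0, wtok_zero hw]
    · rw [MvPowerSeries.coeff_inv, if_neg h0] at hne
      have hs : ∑ x ∈ Finset.HasAntidiagonal.antidiagonal d,
          (if x.2 < d then MvPowerSeries.coeff x.1 A * MvPowerSeries.coeff x.2 A⁻¹ else 0) ≠ 0 := by
        intro hc
        rw [hc, mul_zero] at hne
        exact hne rfl
      obtain ⟨x, hx, hxne⟩ := Finset.exists_ne_zero_of_sum_ne_zero hs
      rw [Finset.HasAntidiagonal.mem_antidiagonal] at hx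
      have hlt : x.2 < d := by
        by_contra hc
        rw [if_neg hc] at hxne
        exact hxne rfl
      rw [if_pos hlt] at hxne
      have h1 : 0 ≤ w x.1 := hA x.1 (left_ne_zero_of_mul hxne)
      have hle : x.2 ≤ d := hlt.le
      have e0 : x.2 0 ≤ d 0 := by
        have := Finsupp.le_def.mp hle 0
        simpa using this
      have e1 : x.2 1 ≤ d 1 := by
        have := Finsupp.le_def.mp hle 1
        simpa using this
      have hnd : x.2 0 ≠ d 0 ∨ x.2 1 ≠ d 1 := by
        by_contra hc
        push_neg at hc
        exact hlt.ne (ext2 hc.1 hc.2)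
      have h2 : 0 ≤ w x.2 := ih x.2 (by omega) (right_ne_zero_of_mul hxne)
      have hsum := hw x.1 x.2
      rw [hx] at hsum
      linarith

def w1 (d : Fin 2 →₀ ℕ) : ℤ := (d 1 : ℤ) - (d 0 : ℤ)

def w2 (d : Fin 2 →₀ ℕ) : ℤ := (d 0 : ℤ) - (d 1 : ℤ)

lemma wtok_w1 : wtok w1 := by
  intro a b; simp only [w1, Finsupp.add_apply]; push_cast; ring

lemma wtok_w2 : wtok w2 := by
  intro a b; simp only [w2, Finsupp.add_apply]; push_cast; ring

lemma Cls_w1_sig (a : PowerSeries K) : Cls w1 0 (sig a) := by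
  intro d hd
  rw [coeff_sig] at hd
  by_cases h : d 0 = d 1
  · simp [w1, h]
  · rw [if_neg h] at hd; exact absurd rfl hd

lemma Cls_w2_sig (a : PowerSeries K) : Cls w2 0 (sig a) := by
  intro d hd
  rw [coeff_sig] at hd
  by_cases h : d 0 = d 1
  · simp [w2, h]
  · rw [if_neg h] at hd; exact absurd rfl hd

lemma coeff_X_ne {s : Fin 2} {d : Fin 2 →₀ ℕ}
    (hd : MvPowerSeries.coeff d (MvPowerSeries.X s : MvPowerSeries (Fin 2) K) ≠ 0) : d = Finsupp.single s 1 := by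
  rw [MvPowerSeries.coeff_X] at hd
  by_contra hc
  rw [if_neg hc] at hd
  exact hd rfl

lemma Cls_w1_X1 : Cls w1 1 (MvPowerSeries.X 1 : MvPowerSeries (Fin 2) K) := by
  intro d hd
  rw [coeff_X_ne hd]
  simp [w1, Finsupp.single_apply]

lemma Cls_w2_X1 : Cls w2 (-1) (MvPowerSeries.X 1 : MvPowerSeries (Fin 2) K) := by
  intro d hd
  rw [coeff_X_ne hd]
  simp [w2, Finsupp.single_apply]

lemma Cls_w2_X0 : Cls w2 1 (MvPowerSeries.X 0 : MvPowerSeries (Fin 2) K) := by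
  intro d hd
  rw [coeff_X_ne hd]
  simp [w2, Finsupp.single_apply]


/-! ### the polynomial bridge -/

def toPoly : MvPolynomial (Fin 2) K →+* Polynomial (PowerSeries K) :=
  MvPolynomial.eval₂Hom (Polynomial.C.comp (PowerSeries.C))
    ![Polynomial.C PowerSeries.X, Polynomial.X]

def ev : Polynomial (PowerSeries K) →+* MvPowerSeries (Fin 2) K :=
  Polynomial.eval₂RingHom (sig : PowerSeries K →+* MvPowerSeries (Fin 2) K)
    (MvPowerSeries.X 1)

def tau : Polynomial (PowerSeries K) →+* K :=
  Polynomial.eval₂RingHom (PowerSeries.constantCoeff) 0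

@[simp] lemma ev_C (a : PowerSeries K) : ev (Polynomial.C a) = sig a := by
  simp [ev]

@[simp] lemma ev_X : ev (Polynomial.X : Polynomial (PowerSeries K)) = MvPowerSeries.X 1 := by
  simp [ev]

lemma ev_toPoly (P : MvPolynomial (Fin 2) K) :
    ev (toPoly P) = MvPolynomial.aeval
      ![MvPowerSeries.X (0 : Fin 2) * MvPowerSeries.X 1, MvPowerSeries.X 1] P := by
  have h : (ev.comp (toPoly : MvPolynomial (Fin 2) K →+* Polynomial (PowerSeries K)))
      = (MvPolynomial.aeval
          ![MvPowerSeries.X (0 : Fin 2) * MvPowerSeries.X 1, MvPowerSeries.X 1] :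
          MvPolynomial (Fin 2) K →ₐ[K] MvPowerSeries (Fin 2) K).toRingHom := by
    apply MvPolynomial.ringHom_ext
    · intro r
      simp only [RingHom.coe_comp, Function.comp_apply, toPoly, MvPolynomial.eval₂Hom_C,
        RingHom.coe_comp, Function.comp_apply, ev_C, sig_C, AlgHom.toRingHom_eq_coe,
        RingHom.coe_coe, MvPolynomial.aeval_C]
      rfl
    · intro i
      fin_cases i
      · simp only [RingHom.coe_comp, Function.comp_apply, toPoly, MvPolynomial.eval₂Hom_X',
          AlgHom.toRingHom_eq_coe, RingHom.coe_coe, MvPolynomial.aeval_X]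
        simp [sig_X]
      · simp only [RingHom.coe_comp, Function.comp_apply, toPoly, MvPolynomial.eval₂Hom_X',
          AlgHom.toRingHom_eq_coe, RingHom.coe_coe, MvPolynomial.aeval_X]
        simp
  exact RingHom.congr_fun h P

lemma eval_toPoly (f : PowerSeries K) (P : MvPolynomial (Fin 2) K) :
    Polynomial.eval f (toPoly P) = MvPolynomial.aeval ![PowerSeries.X, f] P := by
  have h : ((Polynomial.evalRingHom f).comp
        (toPoly : MvPolynomial (Fin 2) K →+* Polynomial (PowerSeries K)))
      = (MvPolynomial.aeval ![PowerSeries.X, f] :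
          MvPolynomial (Fin 2) K →ₐ[K] PowerSeries K).toRingHom := by
    apply MvPolynomial.ringHom_ext
    · intro r
      simp only [RingHom.coe_comp, Function.comp_apply, toPoly, MvPolynomial.eval₂Hom_C,
        Polynomial.coe_evalRingHom, Polynomial.eval_C, AlgHom.toRingHom_eq_coe,
        RingHom.coe_coe, MvPolynomial.aeval_C]
      rfl
    · intro i
      fin_cases i
      · simp [toPoly]
      · simp [toPoly]
  exact RingHom.congr_fun h P

lemma tau_toPoly (P : MvPolynomial (Fin 2) K) :
    tau (toPoly P) = MvPolynomial.eval (fun _ => (0 : K)) P := by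
  have h : (tau.comp (toPoly : MvPolynomial (Fin 2) K →+* Polynomial (PowerSeries K)))
      = (MvPolynomial.eval (fun _ => (0 : K)) :
          MvPolynomial (Fin 2) K →+* K) := by
    apply MvPolynomial.ringHom_ext
    · intro r
      simp [toPoly, tau]
    · intro i
      fin_cases i
      · simp [toPoly, tau]
      · simp [toPoly, tau]
  exact RingHom.congr_fun h P

lemma constantCoeff_ev (r : Polynomial (PowerSeries K)) :
    MvPowerSeries.constantCoeff (ev r) = tau r := by
  have h1 : MvPowerSeries.constantCoeff (ev r)
      = Polynomial.eval₂ ((MvPowerSeries.constantCoeff).comp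
          (sig : PowerSeries K →+* MvPowerSeries (Fin 2) K))
        (MvPowerSeries.constantCoeff (MvPowerSeries.X 1 : MvPowerSeries (Fin 2) K)) r := by
    rw [ev, Polynomial.coe_eval₂RingHom]
    exact Polynomial.hom_eval₂ (p := r) (f := sig) (g := MvPowerSeries.constantCoeff) (x := MvPowerSeries.X 1)
  rw [h1, MvPowerSeries.constantCoeff_X]
  have h2 : ((MvPowerSeries.constantCoeff).comp
      (sig : PowerSeries K →+* MvPowerSeries (Fin 2) K)) = PowerSeries.constantCoeff :=
    RingHom.ext fun a => constantCoeff_sig a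
  rw [h2, tau, Polynomial.coe_eval₂RingHom]

lemma deriv_toPoly (P : MvPolynomial (Fin 2) K) :
    toPoly (MvPolynomial.pderiv 1 P) = Polynomial.derivative (toPoly P) := by
  induction P using MvPolynomial.induction_on with
  | C a =>
    rw [MvPolynomial.pderiv_C]
    simp [toPoly]
  | add p q hp hq =>
    simp only [map_add, hp, hq]
  | mul_X p i hp =>
    have hi : i = 0 ∨ i = 1 := by fin_cases i <;> [exact Or.inl rfl; exact Or.inr rfl]
    rcases hi with rfl | rfl
    · have h1 : (MvPolynomial.pderiv (1 : Fin 2)) (p * MvPolynomial.X 0)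
          = MvPolynomial.pderiv 1 p * MvPolynomial.X 0 := by
        rw [MvPolynomial.pderiv_mul, MvPolynomial.pderiv_X_of_ne (by decide), mul_zero, add_zero]
      rw [h1, map_mul, hp, map_mul, Polynomial.derivative_mul]
      have h2 : (toPoly (MvPolynomial.X (0 : Fin 2)) : Polynomial (PowerSeries K))
          = Polynomial.C PowerSeries.X := by
        simp [toPoly]
      rw [h2, Polynomial.derivative_C, mul_zero, add_zero]
    · have h1 : (MvPolynomial.pderiv (1 : Fin 2)) (p * MvPolynomial.X 1)
          = MvPolynomial.pderiv 1 p * MvPolynomial.X 1 + p := by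
        rw [MvPolynomial.pderiv_mul, MvPolynomial.pderiv_X_self, mul_one]
      rw [h1, map_add, map_mul, hp, map_mul, Polynomial.derivative_mul]
      have h2 : (toPoly (MvPolynomial.X (1 : Fin 2)) : Polynomial (PowerSeries K))
          = Polynomial.X := by
        simp [toPoly]
      rw [h2, Polynomial.derivative_X, mul_one]

lemma Cls_w1_ev (r : Polynomial (PowerSeries K)) : Cls w1 0 (ev r) := by
  induction r using Polynomial.induction_on with
  | C a => rw [ev_C]; exact Cls_w1_sig a
  | add p q hp hq =>
    intro d hd
    rw [map_add, map_add] at hd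
    by_cases h : MvPowerSeries.coeff d (ev p) = 0
    · exact hq d (fun hc => hd (by rw [h, hc, add_zero]))
    · exact hp d h
  | monomial n a ih =>
    have : ev (Polynomial.C a * Polynomial.X ^ (n + 1))
        = ev (Polynomial.C a * Polynomial.X ^ n) * MvPowerSeries.X 1 := by
      rw [← ev_X, ← map_mul]
      ring_nf
    rw [this]
    exact Cls_mono (by norm_num) (Cls_mul wtok_w1 ih Cls_w1_X1)


lemma coeff_diagonal2 (A : MvPowerSeries (Fin 2) K) (n : ℕ) :
    PowerSeries.coeff n (diagonal2 A) = MvPowerSeries.coeff (dg n) A := by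
  rw [diagonal2, PowerSeries.coeff_mk]; rfl

lemma vanish_w1 {k : ℤ} (hk : 0 < k) {A : MvPowerSeries (Fin 2) K}
    (hA : Cls w1 k A) (n : ℕ) : MvPowerSeries.coeff (dg n) A = 0 := by
  by_contra hc
  have h := hA _ hc
  have hw : w1 (dg n) = 0 := by simp [w1]
  omega

lemma vanish_w2 {k : ℤ} (hk : 0 < k) {A : MvPowerSeries (Fin 2) K}
    (hA : Cls w2 k A) (n : ℕ) : MvPowerSeries.coeff (dg n) A = 0 := by
  by_contra hc
  have h := hA _ hc
  have hw : w2 (dg n) = 0 := by simp [w2]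
  omega

end FurstAux

open FurstAux

/-- Furstenberg's formula (Proposition 3.1): if `f ∈ K[[x]]` has no constant term,
`P(x, f) = 0` and `∂P/∂y(0,0) ≠ 0`, then
`R(x,y) = y²·(∂P/∂y)(xy,y)/P(xy,y)` is a power series in `K[[x,y]]` with `Δ(R) = f`.
(Here the variable `0` is `x` and the variable `1` is `y`.) -/
theorem furstenberg_formula (K : Type*) [Field K] (f : PowerSeries K)
    (hf0 : PowerSeries.constantCoeff f = 0)
    (P : MvPolynomial (Fin 2) K)
    (hPf : MvPolynomial.aeval ![PowerSeries.X, f] P = 0)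
    (hPy : MvPolynomial.eval (fun _ => (0 : K)) (MvPolynomial.pderiv 1 P) ≠ 0) :
    ∃ R : MvPowerSeries (Fin 2) K,
      R * MvPolynomial.aeval
          ![MvPowerSeries.X (0 : Fin 2) * MvPowerSeries.X 1, MvPowerSeries.X 1] P =
        (MvPowerSeries.X (1 : Fin 2)) ^ 2 *
          MvPolynomial.aeval
            ![MvPowerSeries.X (0 : Fin 2) * MvPowerSeries.X 1, MvPowerSeries.X 1]
            (MvPolynomial.pderiv 1 P) ∧
      diagonal2 R = f := by
  classical
  have hroot : Polynomial.IsRoot (toPoly P) f := by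
    rw [Polynomial.IsRoot, eval_toPoly, hPf]
  obtain ⟨q, hq⟩ := Polynomial.dvd_iff_isRoot.mpr hroot
  have hder : Polynomial.derivative (toPoly P)
      = q + (Polynomial.X - Polynomial.C f) * Polynomial.derivative q := by
    rw [hq, Polynomial.derivative_mul, Polynomial.derivative_sub, Polynomial.derivative_X,
      Polynomial.derivative_C, sub_zero, one_mul]
  obtain ⟨h, hh⟩ := PowerSeries.X_dvd_iff.mpr hf0
  set g : MvPowerSeries (Fin 2) K := MvPowerSeries.X 0 * sig h with hg
  have hsigf : sig f = MvPowerSeries.X 1 * g := by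
    rw [hh, map_mul, sig_X, hg]; ring
  have hXCf : ev (Polynomial.X - Polynomial.C f) = MvPowerSeries.X 1 * (1 - g) := by
    rw [map_sub, ev_X, ev_C, hsigf]; ring
  have hinv : (1 - g) * (1 - g)⁻¹ = 1 := by
    refine MvPowerSeries.mul_inv_cancel _ ?_
    rw [map_sub, map_one, hg, map_mul, MvPowerSeries.constantCoeff_X, zero_mul, sub_zero]
    exact one_ne_zero
  have htauq : tau q = MvPolynomial.eval (fun _ => (0 : K)) (MvPolynomial.pderiv 1 P) := by
    have ht : tau (Polynomial.X - Polynomial.C f) = 0 := by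
      rw [map_sub]
      simp [tau, hf0]
    have h1 : tau (Polynomial.derivative (toPoly P)) = tau q := by
      rw [hder, map_add, map_mul, ht, zero_mul, add_zero]
    rw [← h1, ← deriv_toPoly, tau_toPoly]
  have hv : MvPowerSeries.constantCoeff (ev q) ≠ 0 := by
    rw [constantCoeff_ev, htauq]; exact hPy
  have hvinv : ev q * (ev q)⁻¹ = 1 := MvPowerSeries.mul_inv_cancel _ hv
  refine ⟨MvPowerSeries.X 1 * (1 - g)⁻¹
      + (MvPowerSeries.X 1) ^ 2 * ev (Polynomial.derivative q) * (ev q)⁻¹, ?_, ?_⟩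
  · rw [← ev_toPoly P, ← ev_toPoly (MvPolynomial.pderiv 1 P), deriv_toPoly]
    have hevp : ev (toPoly P) = MvPowerSeries.X 1 * (1 - g) * ev q := by
      rw [hq, map_mul, hXCf]
    have hevp' : ev (Polynomial.derivative (toPoly P))
        = ev q + MvPowerSeries.X 1 * (1 - g) * ev (Polynomial.derivative q) := by
      rw [hder, map_add, map_mul, hXCf]
    rw [hevp, hevp']
    linear_combination ((MvPowerSeries.X 1 : MvPowerSeries (Fin 2) K) ^ 2 * ev q) * hinv
      + ((MvPowerSeries.X 1 : MvPowerSeries (Fin 2) K) ^ 3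
          * ev (Polynomial.derivative q) * (1 - g)) * hvinv
  · have hsplit : MvPowerSeries.X 1 * (1 - g)⁻¹
        = MvPowerSeries.X 1 + sig f + MvPowerSeries.X 1 * g ^ 2 * (1 - g)⁻¹ := by
      linear_combination ((MvPowerSeries.X 1 : MvPowerSeries (Fin 2) K) * (1 + g)) * hinv
        + hsigf.symm
    have hCg : Cls w2 (1 + 0) g := Cls_mul wtok_w2 Cls_w2_X0 (Cls_w2_sig h)
    have hCg2 : Cls w2 ((1 + 0) + (1 + 0)) (g ^ 2) := by
      rw [pow_two]; exact Cls_mul wtok_w2 hCg hCg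
    have hCinv : Cls w2 0 (1 - g)⁻¹ :=
      Cls_inv wtok_w2 (Cls_sub (Cls_one wtok_w2) (Cls_mono (by norm_num) hCg))
    have hC2 : Cls w2 ((-1 + ((1 + 0) + (1 + 0))) + 0)
        (MvPowerSeries.X 1 * g ^ 2 * (1 - g)⁻¹) :=
      Cls_mul wtok_w2 (Cls_mul wtok_w2 Cls_w2_X1 hCg2) hCinv
    have hCX2 : Cls w1 (1 + 1) ((MvPowerSeries.X 1 : MvPowerSeries (Fin 2) K) ^ 2) := by
      rw [pow_two]; exact Cls_mul wtok_w1 Cls_w1_X1 Cls_w1_X1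
    have hC3 : Cls w1 (((1 + 1) + 0) + 0)
        ((MvPowerSeries.X 1) ^ 2 * ev (Polynomial.derivative q) * (ev q)⁻¹) :=
      Cls_mul wtok_w1 (Cls_mul wtok_w1 hCX2 (Cls_w1_ev _)) (Cls_inv wtok_w1 (Cls_w1_ev q))
    ext n
    rw [coeff_diagonal2, map_add, hsplit, map_add, map_add]
    rw [vanish_w1 (by norm_num) Cls_w1_X1 n, vanish_w2 (by norm_num) hC2 n,
      vanish_w1 (by norm_num) hC3 n]
    rw [coeff_sig]
    simp
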